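/- arXiv:0910.3980 — 2 statements merged into one kernel-verified Lean document; each statement's English description precedes it below -/
import Mathlib

section
/- Let f₁ and f₂ be admissible functions and suppose there exists a surjective linear isometry Φ : ℓ² → ℓ² which maps ℓ²_{f₁} bijectively onto ℓ²_{f₂} with ‖Φx‖_{ℓ²_{f₂}} = ‖x‖_{ℓ²_{f₁}} for all x ∈ ℓ²_{f₁}. Then f₁ = f₂. -/
noncomputable section

/-- `f` is admissible: positive, monotone nondecreasing, and unbounded. -/
def Admissible (f : ℕ → ℝ) : Prop :=
  (∀ n, 0 < f n) ∧ Monotone f ∧ ¬ BddAbove (Set.range f)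

/-- Membership in the weighted space `ℓ²_f`: `∑ f n * x n ^ 2 < ∞`. -/
def MemW (f : ℕ → ℝ) (x : ℕ → ℝ) : Prop :=
  Summable fun n => f n * x n ^ 2

/-- The `ℓ²_f` norm of a sequence, `(∑ f n * x n ^ 2)^(1/2)`. -/
noncomputable def wNorm (f : ℕ → ℝ) (x : ℕ → ℝ) : ℝ :=
  Real.sqrt (∑' n, f n * x n ^ 2)

/-- Equivalence of positive weight functions: `(1/c) f₁ ≤ f₂ ≤ c f₁`. -/
def FEquiv (f₁ f₂ : ℕ → ℝ) : Prop :=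
  ∃ c : ℝ, 0 < c ∧ ∀ n, (1 / c) * f₁ n ≤ f₂ n ∧ f₂ n ≤ c * f₁ n

/-- The Hilbert space `ℓ²` of square-summable real sequences. -/
abbrev L2 := lp (fun _ : ℕ => ℝ) 2

namespace WeightAux

noncomputable def sgl (k : ℕ) : L2 := lp.single (E := fun _ : ℕ => ℝ) 2 k (1 : ℝ)

noncomputable def coordLM (j : ℕ) : L2 →ₗ[ℝ] ℝ where
  toFun x := x j
  map_add' x y := by simp [lp.coeFn_add]
  map_smul' c x := by simp [lp.coeFn_smul]

lemma coordLM_apply (j : ℕ) (x : L2) : coordLM j x = x j := rfl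

lemma single_indep (n : ℕ) :
    LinearIndependent ℝ (fun i : Fin n => sgl (i : ℕ)) := by
  rw [linearIndependent_iff']
  intro s g hsum i hi
  have h2 := congrArg (coordLM (i : ℕ)) hsum
  rw [map_sum, map_zero] at h2
  rw [Finset.sum_eq_single i] at h2
  · simpa [coordLM_apply, sgl, lp.coeFn_smul, lp.single_apply_self] using h2
  · intro j hj hne
    have hne' : ((i : ℕ) : ℕ) ≠ (j : ℕ) := by
      simp [Fin.val_injective.ne_iff]; exact (Ne.symm hne)
    simp [coordLM_apply, sgl, lp.coeFn_smul, lp.single_apply_ne 2 _ _ hne', Pi.single_eq_of_ne hne']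
  · intro h; exact absurd hi h

lemma summable_sq (z : L2) : Summable fun k => (z k) ^ 2 := by
  have h := (lp.memℓp z).summable (p := 2) (by norm_num)
  have : (fun i => ‖(z : ℕ → ℝ) i‖ ^ (2 : ENNReal).toReal) = fun k => (z k) ^ 2 := by
    funext k
    rw [show ((2 : ENNReal).toReal) = (2 : ℝ) by norm_num, Real.rpow_two, Real.norm_eq_abs, sq_abs]
  rwa [this] at h

lemma tsum_sq_eq (z : L2) : ∑' k, (z k) ^ 2 = ‖z‖ ^ 2 := by
  have h := lp.norm_rpow_eq_tsum (p := 2) (by norm_num) z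
  rw [show ((2 : ENNReal).toReal) = (2 : ℝ) by norm_num] at h
  rw [Real.rpow_two] at h
  simp only [Real.rpow_two] at h
  have h2 : ∑' k, ((z : ℕ → ℝ) k) ^ 2 = ∑' i, ‖(z : ℕ → ℝ) i‖ ^ 2 :=
    tsum_congr fun k => by rw [Real.norm_eq_abs, sq_abs]
  rw [h2]; exact h.symm

lemma key (f₁ f₂ : ℕ → ℝ) (h₁ : Admissible f₁) (h₂ : Admissible f₂)
    (Φ : L2 ≃ₗᵢ[ℝ] L2)
    (hmaps : Set.MapsTo Φ {x : L2 | MemW f₁ x} {x : L2 | MemW f₂ x})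
    (hiso : ∀ x : L2, MemW f₁ x → wNorm f₂ (Φ x) = wNorm f₁ x)
    (n : ℕ) : f₂ n ≤ f₁ n := by
  classical
  set V : Submodule ℝ L2 := Submodule.span ℝ (Set.range fun i : Fin (n+1) => sgl (i : ℕ)) with hV
  set W : Submodule ℝ L2 := V.map (Φ.toLinearEquiv : L2 →ₗ[ℝ] L2) with hW
  have hrV : Module.finrank ℝ V = n + 1 := by
    rw [hV, finrank_span_eq_card (single_indep (n+1)), Fintype.card_fin]
  have hrW : Module.finrank ℝ W = n + 1 := by
    rw [hW, LinearEquiv.finrank_map_eq Φ.toLinearEquiv V, hrV]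
  set π : L2 →ₗ[ℝ] (Fin n → ℝ) := LinearMap.pi (fun i : Fin n => coordLM (i : ℕ)) with hπ
  -- find nonzero y in W with first n coordinates zero
  have hker : ∃ y : W, y ≠ 0 ∧ (π.comp W.subtype) y = 0 := by
    by_contra h
    push_neg at h
    have hinj : Function.Injective (π.comp W.subtype) := by
      rw [injective_iff_map_eq_zero]
      intro a ha
      by_contra ha0
      exact (h a ha0) ha
    have hle := LinearMap.finrank_le_finrank_of_injective hinj
    rw [hrW, Module.finrank_pi, Fintype.card_fin] at hle
    omega
  obtain ⟨⟨y, hyW⟩, hy0, hπy⟩ := hker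
  have hy0' : y ≠ 0 := by
    intro h; exact hy0 (Subtype.ext h)
  have hycoord : ∀ j : ℕ, j < n → (y : ℕ → ℝ) j = 0 := by
    intro j hj
    have := congrFun (congrArg (fun g => (g : Fin n → ℝ)) hπy) ⟨j, hj⟩
    simpa [π, coordLM_apply, LinearMap.pi_apply] using this
  obtain ⟨x, hxV, hΦx⟩ := hyW
  have hΦx : Φ x = y := hΦx
  -- x is supported on {0,...,n}
  have hx_supp : ∀ j : ℕ, n < j → (x : ℕ → ℝ) j = 0 := by
    have : ∀ z ∈ V, ∀ j : ℕ, n < j → (z : ℕ → ℝ) j = 0 := by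
      intro z hz
      induction hz using Submodule.span_induction with
      | mem z hmem =>
        obtain ⟨i, rfl⟩ := hmem
        intro j hj
        have : j ≠ (i : ℕ) := by
          have := i.isLt
          omega
        exact lp.single_apply_ne 2 _ _ this
      | zero => intro j hj; simp
      | add a b _ _ ha hb =>
        intro j hj
        rw [lp.coeFn_add, Pi.add_apply, ha j hj, hb j hj, add_zero]
      | smul c a _ ha =>
        intro j hj
        rw [lp.coeFn_smul, Pi.smul_apply, ha j hj, smul_zero]
    exact this x hxV
  have hxm : MemW f₁ x := by
    apply summable_of_ne_finset_zero (s := Finset.range (n+1))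
    intro j hj
    rw [Finset.mem_range] at hj
    rw [hx_supp j (by omega)]
    ring
  have hym : MemW f₂ y := by
    have := hmaps hxm
    rwa [Set.mem_setOf_eq, hΦx] at this
  -- weighted norms equal
  have hQ : ∑' k, f₂ k * (y : ℕ → ℝ) k ^ 2 = ∑' k, f₁ k * (x : ℕ → ℝ) k ^ 2 := by
    have h := hiso x hxm
    rw [hΦx] at h
    unfold wNorm at h
    exact (Real.sqrt_inj
      (tsum_nonneg fun k => mul_nonneg (h₂.1 k).le (sq_nonneg _))
      (tsum_nonneg fun k => mul_nonneg (h₁.1 k).le (sq_nonneg _))).mp h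
  -- ℓ² norms equal
  have hST : ∑' k, ((y : ℕ → ℝ) k) ^ 2 = ∑' k, ((x : ℕ → ℝ) k) ^ 2 := by
    rw [tsum_sq_eq, tsum_sq_eq, ← hΦx, Φ.norm_map]
  -- lower bound
  have hlow : f₂ n * ∑' k, ((y : ℕ → ℝ) k) ^ 2 ≤ ∑' k, f₂ k * (y : ℕ → ℝ) k ^ 2 := by
    rw [← tsum_mul_left]
    apply Summable.tsum_le_tsum _ ((summable_sq y).mul_left _) hym
    intro k
    rcases lt_or_ge k n with hk | hk
    · rw [hycoord k hk]; ring_nf; exact le_refl _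
    · exact mul_le_mul_of_nonneg_right (h₂.2.1 hk) (sq_nonneg _)
  -- upper bound
  have hxsum : ∀ j ∉ Finset.range (n+1), ((x : ℕ → ℝ) j) ^ 2 = 0 := by
    intro j hj
    rw [Finset.mem_range] at hj
    rw [hx_supp j (by omega)]; ring
  have hfxsum : ∀ j ∉ Finset.range (n+1), f₁ j * ((x : ℕ → ℝ) j) ^ 2 = 0 := by
    intro j hj
    rw [hxsum j hj]; ring
  have hhigh : ∑' k, f₁ k * (x : ℕ → ℝ) k ^ 2 ≤ f₁ n * ∑' k, ((x : ℕ → ℝ) k) ^ 2 := by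
    rw [tsum_eq_sum hfxsum, tsum_eq_sum hxsum, Finset.mul_sum]
    apply Finset.sum_le_sum
    intro k hk
    rw [Finset.mem_range] at hk
    exact mul_le_mul_of_nonneg_right (h₁.2.1 (by omega : k ≤ n)) (sq_nonneg _)
  -- positivity of S
  have hSpos : 0 < ∑' k, ((y : ℕ → ℝ) k) ^ 2 := by
    have hne : ∃ k, (y : ℕ → ℝ) k ≠ 0 := by
      by_contra h
      push_neg at h
      exact hy0' (lp.ext (funext fun k => by simp [h k]))
    obtain ⟨k, hk⟩ := hne
    have h1 : ((y : ℕ → ℝ) k) ^ 2 ≤ ∑' k, ((y : ℕ → ℝ) k) ^ 2 :=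
      Summable.le_tsum (summable_sq y) k (fun j _ => sq_nonneg _)
    have := pow_pos (abs_pos.mpr hk) 2
    rw [← sq_abs] at h1
    exact lt_of_lt_of_le this h1
  -- combine
  have : f₂ n * ∑' k, ((y : ℕ → ℝ) k) ^ 2 ≤ f₁ n * ∑' k, ((y : ℕ → ℝ) k) ^ 2 := by
    calc f₂ n * ∑' k, ((y : ℕ → ℝ) k) ^ 2 ≤ ∑' k, f₂ k * (y : ℕ → ℝ) k ^ 2 := hlow
    _ = ∑' k, f₁ k * (x : ℕ → ℝ) k ^ 2 := hQ
    _ ≤ f₁ n * ∑' k, ((x : ℕ → ℝ) k) ^ 2 := hhigh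
    _ = f₁ n * ∑' k, ((y : ℕ → ℝ) k) ^ 2 := by rw [hST]
  exact le_of_mul_le_mul_right (by linarith [this]) hSpos

end WeightAux

/-- If a surjective linear isometry `Φ : ℓ² → ℓ²` maps `ℓ²_{f₁}` bijectively
onto `ℓ²_{f₂}` preserving the weighted norms, then `f₁ = f₂`. -/
theorem weight_eq_of_scale_isometry (f₁ f₂ : ℕ → ℝ)
    (h₁ : Admissible f₁) (h₂ : Admissible f₂)
    (Φ : L2 ≃ₗᵢ[ℝ] L2)
    (hbij : Set.BijOn Φ {x : L2 | MemW f₁ x} {x : L2 | MemW f₂ x})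
    (hiso : ∀ x : L2, MemW f₁ x → wNorm f₂ (Φ x) = wNorm f₁ x) :
    f₁ = f₂ := by
  have hbij' : Set.BijOn Φ.symm {x : L2 | MemW f₂ x} {x : L2 | MemW f₁ x} := by
    apply Set.BijOn.symm _ hbij
    constructor
    · intro a _; exact Φ.apply_symm_apply a
    · intro a _; exact Φ.symm_apply_apply a
  have hiso' : ∀ y : L2, MemW f₂ y → wNorm f₁ (Φ.symm y) = wNorm f₂ y := by
    intro y hy
    have hmem : MemW f₁ (Φ.symm y) := hbij'.mapsTo hy
    have := hiso (Φ.symm y) hmem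
    rw [Φ.apply_symm_apply] at this
    exact this.symm
  funext n
  exact le_antisymm
    (WeightAux.key f₂ f₁ h₂ h₁ Φ.symm hbij'.mapsTo hiso' n)
    (WeightAux.key f₁ f₂ h₁ h₂ Φ hbij.mapsTo hiso n)
end
end

section
/- Let F₁, F₂ : ℕ≥1 → (ℕ → ℝ) be sequences of admissible functions, and for i ∈ {1,2} define the nested sequence ℓ^{2,F_i}_0 = ℓ² and ℓ^{2,F_i}_k = ℓ²_{P^i_k} for k ≥ 1, where P^i_k = ∏_{j=1}^k F_i(j) is the pointwise product. Suppose there exists k ≥ 1 such that F₁(k) is not equivalent to F₂(k). Then there is no bijective linear map Φ : ℓ² → ℓ² which restricts for every k to a bijection ℓ^{2,F₁}_k → ℓ^{2,F₂}_k and satisfies, for every k, a two-sided bound (1/c_k)·‖x‖_{ℓ^{2,F₁}_k} ≤ ‖Φx‖_{ℓ^{2,F₂}_k} ≤ c_k·‖x‖_{ℓ^{2,F₁}_k} for some constant c_k > 0 and all x ∈ ℓ^{2,F₁}_k. -/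
noncomputable section

lemma coord_sum (n : ℕ) (w : Fin (n+1) → ℝ) (m : ℕ) :
    ((∑ j, w j • lp.single 2 (j:ℕ) (1:ℝ) : L2) : ℕ → ℝ) m
      = if h : m < n + 1 then w ⟨m, h⟩ else 0 := by
  rw [lp.coeFn_sum]
  simp only [Finset.sum_apply, lp.coeFn_smul, Pi.smul_apply, lp.single_apply, smul_eq_mul]
  by_cases hm : m < n + 1
  · rw [dif_pos hm, Finset.sum_eq_single ⟨m, hm⟩]
    · simp
    · intro j _ hj
      rw [Pi.single_apply, if_neg, mul_zero]
      intro h; exact hj (by ext; simp [← h])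
    · simp
  · rw [dif_neg hm, Finset.sum_eq_zero]
    intro j _
    rw [Pi.single_apply, if_neg, mul_zero]
    intro h; exact hm (h ▸ j.isLt)

lemma wNorm_sq (w : ℕ → ℝ) (hw : ∀ n, 0 ≤ w n) (x : ℕ → ℝ) :
    wNorm w x ^ 2 = ∑' n, w n * x n ^ 2 :=
  Real.sq_sqrt (tsum_nonneg fun n => mul_nonneg (hw n) (sq_nonneg _))

lemma sq_le_of_wNorm_le (w₁ w₂ : ℕ → ℝ) (hw₁ : ∀ n, 0 ≤ w₁ n) (hw₂ : ∀ n, 0 ≤ w₂ n)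
    (x y : ℕ → ℝ) (C : ℝ) (h : wNorm w₁ x ≤ C * wNorm w₂ y) :
    (∑' n, w₁ n * x n ^ 2) ≤ C ^ 2 * ∑' n, w₂ n * y n ^ 2 := by
  rw [← wNorm_sq w₁ hw₁ x, ← wNorm_sq w₂ hw₂ y, ← mul_pow]
  exact pow_le_pow_left₀ (Real.sqrt_nonneg _) h 2

lemma key (a b f g : ℕ → ℝ) (ha : ∀ n, 0 < a n) (hb : ∀ n, 0 < b n)
    (hf : ∀ n, 0 < f n) (hfm : Monotone f) (hg : ∀ n, 0 < g n) (hgm : Monotone g)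
    (Φ : L2 ≃ₗ[ℝ] L2)
    (hm1 : ∀ x : L2, MemW a ↑x → MemW b ↑(Φ x))
    (hm2 : ∀ x : L2, MemW (fun n => a n * f n) ↑x → MemW (fun n => b n * g n) ↑(Φ x))
    (c c' : ℝ) (hc : 0 < c) (hc' : 0 < c')
    (hb1 : ∀ x : L2, MemW a ↑x → wNorm a ↑x ≤ c * wNorm b ↑(Φ x))
    (hb2 : ∀ x : L2, MemW (fun n => a n * f n) ↑x →
      wNorm (fun n => b n * g n) ↑(Φ x) ≤ c' * wNorm (fun n => a n * f n) ↑x) :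
    ∀ n, g n ≤ (c * c') ^ 2 * f n := by
  intro n
  set E : Fin (n+1) → L2 := fun j => lp.single 2 (j:ℕ) (1:ℝ) with hE
  let T : (Fin (n+1) → ℝ) →ₗ[ℝ] (Fin n → ℝ) :=
    { toFun := fun v => fun i => (↑(Φ (∑ j, v j • E j)) : ℕ → ℝ) (i : ℕ)
      map_add' := by
        intro u v; funext i
        show (↑(Φ (∑ j, (u + v) j • E j)) : ℕ → ℝ) (i : ℕ)
            = (↑(Φ (∑ j, u j • E j)) : ℕ → ℝ) (i : ℕ) + (↑(Φ (∑ j, v j • E j)) : ℕ → ℝ) (i : ℕ)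
        have e : (∑ j, (u + v) j • E j) = (∑ j, u j • E j) + (∑ j, v j • E j) := by
          rw [← Finset.sum_add_distrib]
          exact Finset.sum_congr rfl fun j _ => by rw [Pi.add_apply, add_smul]
        rw [e, map_add, lp.coeFn_add, Pi.add_apply]
      map_smul' := by
        intro r v; funext i
        show (↑(Φ (∑ j, (r • v) j • E j)) : ℕ → ℝ) (i : ℕ)
            = r * (↑(Φ (∑ j, v j • E j)) : ℕ → ℝ) (i : ℕ)
        have e : (∑ j, (r • v) j • E j) = r • (∑ j, v j • E j) := by
          rw [Finset.smul_sum]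
          exact Finset.sum_congr rfl fun j _ => by rw [Pi.smul_apply, smul_smul, smul_eq_mul]
        rw [e, map_smul, lp.coeFn_smul, Pi.smul_apply, smul_eq_mul] }
  have hni : ¬ Function.Injective T := by
    intro hinj
    have := LinearMap.finrank_le_finrank_of_injective hinj
    simp [Module.finrank_fintype_fun_eq_card] at this
  obtain ⟨u, v, huv, hune⟩ := Function.not_injective_iff.mp hni
  set wv := u - v with hwv
  have hw0 : wv ≠ 0 := sub_ne_zero.mpr hune
  have hTw : T wv = 0 := by rw [map_sub, huv, sub_self]
  set x : L2 := ∑ j, wv j • E j with hx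
  have hxco : ∀ m : ℕ, (x : ℕ → ℝ) m = if h : m < n + 1 then wv ⟨m, h⟩ else 0 :=
    fun m => coord_sum n wv m
  set y : L2 := Φ x with hy
  have hyco : ∀ i : ℕ, i < n → (y : ℕ → ℝ) i = 0 := fun i hi => congrFun hTw ⟨i, hi⟩
  obtain ⟨j0, hj0⟩ := Function.ne_iff.mp hw0
  have hxj0 : (x : ℕ → ℝ) (j0 : ℕ) ≠ 0 := by
    rw [hxco, dif_pos j0.isLt]
    simpa using hj0
  have hxne : x ≠ 0 := by
    intro h
    exact hxj0 (by rw [h]; simp [lp.coeFn_zero])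
  have hyne : y ≠ 0 := fun h => hxne (by simpa using Φ.injective (h.trans (map_zero Φ).symm))
  obtain ⟨i0, hi0⟩ : ∃ i0 : ℕ, (y : ℕ → ℝ) i0 ≠ 0 := by
    by_contra h
    push_neg at h
    exact hyne (lp.eq_zero_iff_coeFn_eq_zero.mpr (funext h))
  have hsupp : ∀ w' : ℕ → ℝ, Summable fun m => w' m * (x : ℕ → ℝ) m ^ 2 := by
    intro w'
    apply summable_of_ne_finset_zero (s := Finset.range (n+1))
    intro m hm
    rw [hxco, dif_neg (by simpa using hm)]
    ring
  have hMx1 : MemW a ↑x := hsupp a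
  have hMx2 : MemW (fun n => a n * f n) ↑x := hsupp _
  have hMy1 : MemW b ↑y := hm1 x hMx1
  have hMy2 : MemW (fun n => b n * g n) ↑y := hm2 x hMx2
  set S₁ := ∑' m, a m * (x : ℕ → ℝ) m ^ 2 with hS₁
  set S₂ := ∑' m, b m * (y : ℕ → ℝ) m ^ 2 with hS₂
  have hS₂pos : 0 < S₂ :=
    Summable.tsum_pos hMy1 (fun m => mul_nonneg (hb m).le (sq_nonneg _)) i0
      (mul_pos (hb i0) (by positivity))
  have step1 : g n * S₂ ≤ ∑' m, (b m * g m) * (y : ℕ → ℝ) m ^ 2 := by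
    rw [hS₂, ← tsum_mul_left]
    apply Summable.tsum_le_tsum _ (hMy1.mul_left (g n)) hMy2
    intro m
    dsimp only
    by_cases hm : m < n
    · rw [hyco m hm]; ring_nf; exact le_rfl
    · have hgn : g n ≤ g m := hgm (not_lt.mp hm)
      nlinarith [mul_nonneg (hb m).le (sq_nonneg ((y : ℕ → ℝ) m))]
  have step2 : (∑' m, (b m * g m) * (y : ℕ → ℝ) m ^ 2)
      ≤ c' ^ 2 * ∑' m, (a m * f m) * (x : ℕ → ℝ) m ^ 2 :=
    sq_le_of_wNorm_le _ _ (fun m => mul_nonneg (hb m).le (hg m).le)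
      (fun m => mul_nonneg (ha m).le (hf m).le) _ _ c' (hb2 x hMx2)
  have step3 : (∑' m, (a m * f m) * (x : ℕ → ℝ) m ^ 2) ≤ f n * S₁ := by
    rw [hS₁, ← tsum_mul_left]
    apply Summable.tsum_le_tsum _ (hsupp _) ((hsupp a).mul_left (f n))
    intro m
    dsimp only
    by_cases hm : m < n + 1
    · have hfm' : f m ≤ f n := hfm (by omega)
      nlinarith [mul_nonneg (ha m).le (sq_nonneg ((x : ℕ → ℝ) m))]
    · rw [hxco, dif_neg hm]; ring_nf; exact le_rfl
  have step4 : S₁ ≤ c ^ 2 * S₂ :=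
    sq_le_of_wNorm_le _ _ (fun m => (ha m).le) (fun m => (hb m).le) _ _ c (hb1 x hMx1)
  have t2' : f n * S₁ ≤ f n * (c ^ 2 * S₂) := mul_le_mul_of_nonneg_left step4 (hf n).le
  have t1' : c' ^ 2 * (∑' m, (a m * f m) * (x : ℕ → ℝ) m ^ 2) ≤ c' ^ 2 * (f n * (c ^ 2 * S₂)) :=
    mul_le_mul_of_nonneg_left (le_trans step3 t2') (sq_nonneg c')
  have final : g n * S₂ ≤ ((c * c') ^ 2 * f n) * S₂ := by
    calc g n * S₂ ≤ c' ^ 2 * (f n * (c ^ 2 * S₂)) := le_trans step1 (le_trans step2 t1')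
      _ = ((c * c') ^ 2 * f n) * S₂ := by ring
  exact le_of_mul_le_mul_right final hS₂pos

/-- Nested scales built from sequences of admissible weights, with
`ℓ^{2,F}_k = ℓ²` weighted by `∏_{j=1}^k F j` (the empty product giving `ℓ²`
itself for `k = 0`). If `F₁ k ≁ F₂ k` for some `k ≥ 1`, then there is no
bijective linear map `Φ : ℓ² → ℓ²` restricting on every level to a bijection
with a two-sided norm bound. -/
theorem no_scale_iso_of_nonequiv_factor (F₁ F₂ : ℕ → ℕ → ℝ)
    (h₁ : ∀ k, 1 ≤ k → Admissible (F₁ k)) (h₂ : ∀ k, 1 ≤ k → Admissible (F₂ k))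
    (hne : ∃ k, 1 ≤ k ∧ ¬ FEquiv (F₁ k) (F₂ k)) :
    ¬ ∃ Φ : L2 ≃ₗ[ℝ] L2, ∀ k : ℕ,
      Set.BijOn Φ {x : L2 | MemW (fun n => ∏ j ∈ Finset.Icc 1 k, F₁ j n) x}
        {x : L2 | MemW (fun n => ∏ j ∈ Finset.Icc 1 k, F₂ j n) x} ∧
      ∃ c : ℝ, 0 < c ∧ ∀ x : L2, MemW (fun n => ∏ j ∈ Finset.Icc 1 k, F₁ j n) x →
        (1 / c) * wNorm (fun n => ∏ j ∈ Finset.Icc 1 k, F₁ j n) x ≤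
            wNorm (fun n => ∏ j ∈ Finset.Icc 1 k, F₂ j n) (Φ x) ∧
        wNorm (fun n => ∏ j ∈ Finset.Icc 1 k, F₂ j n) (Φ x) ≤
            c * wNorm (fun n => ∏ j ∈ Finset.Icc 1 k, F₁ j n) x := by
  rintro ⟨Φ, hΦ⟩
  obtain ⟨k0, hk0, hneq⟩ := hne
  obtain ⟨m, rfl⟩ : ∃ m, k0 = m + 1 := ⟨k0 - 1, by omega⟩
  set A : ℕ → ℝ := fun n => ∏ j ∈ Finset.Icc 1 m, F₁ j n with hA
  set B : ℕ → ℝ := fun n => ∏ j ∈ Finset.Icc 1 m, F₂ j n with hB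
  set f : ℕ → ℝ := F₁ (m + 1) with hfdef
  set g : ℕ → ℝ := F₂ (m + 1) with hgdef
  have hadm₁ := h₁ (m + 1) (by omega)
  have hadm₂ := h₂ (m + 1) (by omega)
  have hApos : ∀ n, 0 < A n := fun n =>
    Finset.prod_pos fun j hj => (h₁ j (Finset.mem_Icc.mp hj).1).1 n
  have hBpos : ∀ n, 0 < B n := fun n =>
    Finset.prod_pos fun j hj => (h₂ j (Finset.mem_Icc.mp hj).1).1 n
  have hprod₁ : (fun n => ∏ j ∈ Finset.Icc 1 (m + 1), F₁ j n) = fun n => A n * f n := by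
    funext n
    exact Finset.prod_Icc_succ_top (by omega) _
  have hprod₂ : (fun n => ∏ j ∈ Finset.Icc 1 (m + 1), F₂ j n) = fun n => B n * g n := by
    funext n
    exact Finset.prod_Icc_succ_top (by omega) _
  obtain ⟨hbijm, c, hc, hbdm⟩ := hΦ m
  obtain ⟨hbijk, c', hc', hbdk⟩ := hΦ (m + 1)
  rw [hprod₁, hprod₂] at hbijk hbdk
  -- direction 1 : g ≤ C f
  have dir1 : ∀ n, g n ≤ (c * c') ^ 2 * f n := by
    apply key A B f g hApos hBpos hadm₁.1 hadm₁.2.1 hadm₂.1 hadm₂.2.1 Φ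
      (fun x hx => hbijm.mapsTo hx) (fun x hx => hbijk.mapsTo hx) c c' hc hc'
    · intro x hx
      have h := (hbdm x hx).1
      rw [div_mul_eq_mul_div, div_le_iff₀ hc] at h
      calc wNorm A ↑x ≤ wNorm B ↑(Φ x) * c := by simpa using h
        _ = c * wNorm B ↑(Φ x) := mul_comm _ _
    · intro x hx
      exact (hbdk x hx).2
  -- facts about Φ.symm
  have hsymm1 : ∀ y : L2, MemW B ↑y → Φ.symm y ∈ {x : L2 | MemW A ↑x} ∧ Φ (Φ.symm y) = y := by
    intro y hy
    obtain ⟨x, hxS, hΦx⟩ := hbijm.surjOn hy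
    have : Φ.symm y = x := by rw [← hΦx]; exact Φ.symm_apply_apply x
    exact ⟨this ▸ hxS, Φ.apply_symm_apply y⟩
  have hsymm2 : ∀ y : L2, MemW (fun n => B n * g n) ↑y →
      Φ.symm y ∈ {x : L2 | MemW (fun n => A n * f n) ↑x} := by
    intro y hy
    obtain ⟨x, hxS, hΦx⟩ := hbijk.surjOn hy
    have : Φ.symm y = x := by rw [← hΦx]; exact Φ.symm_apply_apply x
    exact this ▸ hxS
  -- direction 2 : f ≤ C g, via Φ.symm
  have dir2 : ∀ n, f n ≤ (c * c') ^ 2 * g n := by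
    apply key B A g f hBpos hApos hadm₂.1 hadm₂.2.1 hadm₁.1 hadm₁.2.1 Φ.symm
      (fun y hy => (hsymm1 y hy).1) (fun y hy => hsymm2 y hy) c c' hc hc'
    · intro y hy
      have hxA := (hsymm1 y hy).1
      have h := (hbdm (Φ.symm y) hxA).2
      rw [Φ.apply_symm_apply] at h
      exact h
    · intro y hy
      have hxA := hsymm2 y hy
      have h := (hbdk (Φ.symm y) hxA).1
      rw [Φ.apply_symm_apply] at h
      rw [div_mul_eq_mul_div, div_le_iff₀ hc'] at h
      calc wNorm (fun n => A n * f n) ↑(Φ.symm y)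
          ≤ wNorm (fun n => B n * g n) ↑y * c' := by simpa using h
        _ = c' * wNorm (fun n => B n * g n) ↑y := mul_comm _ _
  -- contradiction with hneq
  apply hneq
  refine ⟨(c * c') ^ 2, by positivity, fun n => ⟨?_, ?_⟩⟩
  · have h := dir2 n
    have hC : (0:ℝ) < (c * c') ^ 2 := by positivity
    rw [div_mul_eq_mul_div, div_le_iff₀ hC, one_mul]
    calc f n ≤ (c * c') ^ 2 * g n := h
      _ = g n * (c * c') ^ 2 := mul_comm _ _
  · exact dir1 n
end
end
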